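/- Let p be a prime, α a primitive root modulo p, and c an integer with 0 ≤ c ≤ p−2. Then the map f : {1,…,p−1} → {1,…,p−1}, f(i) = α^(i−1+c) mod p, is a bijection satisfying the Costas property: for all i, j, and all t with 1 ≤ t ≤ p−2 such that i+t, j+t ≤ p−1, if f(i+t) − f(i) = f(j+t) − f(j) then i = j. -/

import Mathlib

theorem welch_costas (p : ℕ) (hp : p.Prime) (α : ℕ)
    (hα : IsPrimitiveRoot (α : ZMod p) (p - 1))
    (c : ℕ) (hc : c ≤ p - 2)
    (f : ℕ → ℕ) (hf : ∀ i : ℕ, f i = α ^ (i - 1 + c) % p) :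
    Set.BijOn f (Set.Icc 1 (p - 1)) (Set.Icc 1 (p - 1)) ∧
      (∀ i ∈ Set.Icc 1 (p - 1), ∀ j ∈ Set.Icc 1 (p - 1), ∀ t : ℕ,
        1 ≤ t → t ≤ p - 2 → i + t ≤ p - 1 → j + t ≤ p - 1 →
        (f (i + t) : ℤ) - f i = (f (j + t) : ℤ) - f j → i = j) := by
  haveI : Fact p.Prime := ⟨hp⟩
  have hp2 : 2 ≤ p := hp.two_le
  have hn : 0 < p - 1 := by omega
  have hαu : IsUnit (α : ZMod p) := hα.isUnit hn.ne'
  have hα0 : (α : ZMod p) ≠ 0 := hαu.ne_zero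
  have hfz : ∀ i, (f i : ZMod p) = (α : ZMod p) ^ (i - 1 + c) := by
    intro i
    rw [hf i, ZMod.natCast_mod, Nat.cast_pow]
  have hne : ∀ k, (α : ZMod p) ^ k ≠ 0 := fun k => pow_ne_zero _ hα0
  have hmem : ∀ i, f i ∈ Set.Icc 1 (p - 1) := by
    intro i
    constructor
    · rcases Nat.eq_zero_or_pos (f i) with h | h
      · exfalso
        have h2 := hfz i
        rw [h, Nat.cast_zero] at h2
        exact hne _ h2.symm
      · exact h
    · have : f i < p := by rw [hf i]; exact Nat.mod_lt _ (by omega)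
      omega
  have hinj : ∀ i ∈ Set.Icc 1 (p - 1), ∀ j ∈ Set.Icc 1 (p - 1),
      (α : ZMod p) ^ (i - 1 + c) = (α : ZMod p) ^ (j - 1 + c) → i = j := by
    intro i hi j hj h
    obtain ⟨hi1, hi2⟩ := hi
    obtain ⟨hj1, hj2⟩ := hj
    rw [pow_add, pow_add] at h
    have h2 : (α : ZMod p) ^ (i - 1) = (α : ZMod p) ^ (j - 1) :=
      mul_right_cancel₀ (hne c) h
    have := hα.pow_inj (by omega : i - 1 < p - 1) (by omega : j - 1 < p - 1) h2
    omega
  have hInjOn : Set.InjOn f (Set.Icc 1 (p - 1)) := by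
    intro i hi j hj h
    apply hinj i hi j hj
    have h2 : (f i : ZMod p) = (f j : ZMod p) := by rw [h]
    rwa [hfz, hfz] at h2
  have hMaps : Set.MapsTo f (Set.Icc 1 (p - 1)) (Set.Icc 1 (p - 1)) :=
    fun i _ => hmem i
  refine ⟨?_, ?_⟩
  · exact ((Set.finite_Icc 1 (p - 1)).injOn_iff_bijOn_of_mapsTo hMaps).mp hInjOn
  · intro i hi j hj t ht1 ht2 hit hjt hE
    obtain ⟨hi1, hi2⟩ := hi
    obtain ⟨hj1, hj2⟩ := hj
    have hz : ((f (i + t) : ZMod p)) - (f i : ZMod p)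
        = ((f (j + t) : ZMod p)) - (f j : ZMod p) := by
      have := congrArg (fun z : ℤ => (z : ZMod p)) hE
      push_cast at this
      exact this
    rw [hfz, hfz, hfz, hfz] at hz
    have e1 : i + t - 1 + c = i - 1 + c + t := by omega
    have e2 : j + t - 1 + c = j - 1 + c + t := by omega
    rw [e1, e2, pow_add, pow_add] at hz
    have hαt : (α : ZMod p) ^ t ≠ 1 :=
      hα.pow_ne_one_of_pos_of_lt (by omega) (by omega)
    have h3 : ((α : ZMod p) ^ (i - 1 + c) - (α : ZMod p) ^ (j - 1 + c))
        * ((α : ZMod p) ^ t - 1) = 0 := by linear_combination hz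
    rcases mul_eq_zero.mp h3 with h4 | h4
    · exact hinj i ⟨hi1, hi2⟩ j ⟨hj1, hj2⟩ (sub_eq_zero.mp h4)
    · exact absurd (sub_eq_zero.mp h4) hαt
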